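/- arXiv:1512.01113 — 6 statements merged into one kernel-verified Lean document; each statement's English description precedes it below -/
import Mathlib

section
/- Let G be a finite simple graph and let f be an injective function assigning to each vertex of G a nonempty finite set of non-negative integers. Then f is a weak integer additive set-labeling of G (i.e., for every edge uv of G, |f(u) + f(v)| = |f(u)| or |f(u) + f(v)| = |f(v)|) if and only if for every edge uv of G at least one of the end vertices u, v is mono-indexed (i.e., |f(u)| = 1 or |f(v)| = 1). -/
open Pointwise

theorem weak_IASL_iff_mono_indexed_end {V : Type*} [Fintype V] (G : SimpleGraph V)
    (f : V → Finset ℕ) (hinj : Function.Injective f) (hne : ∀ v, (f v).Nonempty) :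
    (∀ u v, G.Adj u v →
        ((f u + f v).card = (f u).card ∨ (f u + f v).card = (f v).card)) ↔
      (∀ u v, G.Adj u v → ((f u).card = 1 ∨ (f v).card = 1)) := by
  have key : ∀ u v : V, ((f u + f v).card = (f u).card ∨ (f u + f v).card = (f v).card) ↔
      ((f u).card = 1 ∨ (f v).card = 1) := by
    intro u v
    have hcd : (f u).card + (f v).card - 1 ≤ (f u + f v).card :=
      cauchy_davenport_add_of_linearOrder_isCancelAdd (hne u) (hne v)
    have hu := Finset.card_pos.2 (hne u)
    have hv := Finset.card_pos.2 (hne v)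
    constructor
    · rintro (h | h)
      · right; omega
      · left; omega
    · rintro (h | h)
      · right
        obtain ⟨a, ha⟩ := Finset.card_eq_one.1 h
        rw [ha, Finset.card_singleton_add]
      · left
        obtain ⟨a, ha⟩ := Finset.card_eq_one.1 h
        rw [ha, Finset.card_add_singleton]
  constructor
  · intro H u v h; exact (key u v).mp (H u v h)
  · intro H u v h; exact (key u v).mpr (H u v h)
end

section
/- Let G be a finite simple graph and let f be a weak integer additive set-labeling of G. Then the set I = {v ∈ V(G) : |f(v)| ≥ 2} of vertices with non-singleton set-labels is an independent set in G. -/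
open Pointwise

theorem nonsingleton_vertices_independent {V : Type*} [Fintype V] (G : SimpleGraph V)
    (f : V → Finset ℕ) (hinj : Function.Injective f) (hne : ∀ v, (f v).Nonempty)
    (hweak : ∀ u v, G.Adj u v →
      ((f u + f v).card = (f u).card ∨ (f u + f v).card = (f v).card)) :
    ∀ u ∈ {v : V | 2 ≤ (f v).card}, ∀ w ∈ {v : V | 2 ≤ (f v).card}, ¬ G.Adj u w := by
  intro u hu w hw hadj
  simp only [Set.mem_setOf_eq] at hu hw
  have h := cauchy_davenport_add_of_linearOrder_isCancelAdd (hne u) (hne w)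
  rcases hweak u w hadj with h1 | h1 <;> omega
end

section
/- Let G be a finite simple graph and let I be any independent set of vertices of G. Then there exists a weak integer additive set-labeling f of G whose mono-indexed edges are exactly the edges of G with no end vertex in I; consequently, the sparing number of G satisfies φ(G) ≤ |E(G − I)|, the number of edges of G with no end vertex in I. -/
open Pointwise

def IsWeakIASL {V : Type*} (G : SimpleGraph V) (f : V → Finset ℕ) : Prop :=
  Function.Injective f ∧ (∀ v, (f v).Nonempty) ∧
    ∀ u v, G.Adj u v →
      ((f u + f v).card = (f u).card ∨ (f u + f v).card = (f v).card)

def monoEdgeSet {V : Type*} (G : SimpleGraph V) (f : V → Finset ℕ) : Set (Sym2 V) :=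
  {e | e ∈ G.edgeSet ∧ ∃ u v, e = s(u, v) ∧ (f u + f v).card = 1}

noncomputable def sparingNumber {V : Type*} (G : SimpleGraph V) : ℕ :=
  sInf {n | ∃ f : V → Finset ℕ, IsWeakIASL G f ∧ (monoEdgeSet G f).ncard = n}


theorem exists_weak_IASL_mono_edges_eq {V : Type*} [Fintype V] (G : SimpleGraph V)
    (I : Set V) (hI : ∀ u ∈ I, ∀ v ∈ I, ¬ G.Adj u v) :
    (∃ f : V → Finset ℕ, IsWeakIASL G f ∧
        monoEdgeSet G f = {e | e ∈ G.edgeSet ∧ ∀ v ∈ e, v ∉ I}) ∧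
      sparingNumber G ≤ {e | e ∈ G.edgeSet ∧ ∀ v ∈ e, v ∉ I}.ncard := by
  classical
  set ι : V → ℕ := fun v => (Fintype.equivFin V v : ℕ) with hι
  have hιinj : Function.Injective ι := fun a b h => by
    apply (Fintype.equivFin V).injective
    exact Fin.ext h
  set f : V → Finset ℕ := fun v =>
    if v ∈ I then ({2 * ι v, 2 * ι v + 1} : Finset ℕ) else {2 * ι v} with hf
  have hcard : ∀ v, v ∈ I → (f v).card = 2 := by
    intro v hv
    simp only [hf, if_pos hv]
    rw [Finset.card_insert_of_notMem (by simp), Finset.card_singleton]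
  have hsing : ∀ v, v ∉ I → f v = {2 * ι v} := fun v hv => by simp [hf, hv]
  have hne : ∀ v, (f v).Nonempty := by
    intro v
    by_cases hv : v ∈ I <;> simp [hf, hv]
  have hinj : Function.Injective f := by
    intro a b hab
    by_cases ha : a ∈ I <;> by_cases hb : b ∈ I
    · have : (2 : ℕ) * ι a ∈ f b := by
        rw [← hab]; simp [hf, if_pos ha]
      rw [hf] at this
      simp only [if_pos hb, Finset.mem_insert, Finset.mem_singleton] at this
      rcases this with h | h
      · exact hιinj (by omega)
      · omega
    · exfalso
      have h1 := hcard a ha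
      rw [hab, hsing b hb] at h1
      simp at h1
    · exfalso
      have h1 := hcard b hb
      rw [← hab, hsing a ha] at h1
      simp at h1
    · rw [hsing a ha, hsing b hb] at hab
      simp only [Finset.singleton_inj] at hab
      exact hιinj (by omega)
  have hweak : IsWeakIASL G f := by
    refine ⟨hinj, hne, ?_⟩
    intro u v huv
    by_cases hu : u ∈ I
    · by_cases hv : v ∈ I
      · exact absurd huv (hI u hu v hv)
      · left; rw [hsing v hv, Finset.card_add_singleton]
    · right; rw [hsing u hu, Finset.card_singleton_add]
  have hmono : monoEdgeSet G f = {e | e ∈ G.edgeSet ∧ ∀ v ∈ e, v ∉ I} := by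
    ext e
    induction e using Sym2.ind with
    | _ a b =>
      constructor
      · rintro ⟨he, u, v, huv, hc⟩
        refine ⟨he, ?_⟩
        have hu : u ∉ I := by
          intro hu
          have := Finset.card_le_card_add_right (s := f u) (hne v)
          rw [hc, hcard u hu] at this
          omega
        have hv : v ∉ I := by
          intro hv
          have := Finset.card_le_card_add_left (t := f v) (hne u)
          rw [hc, hcard v hv] at this
          omega
        intro w hw
        have : w = u ∨ w = v := by
          rw [huv] at hw
          simpa using hw
        rcases this with rfl | rfl <;> assumption
      · rintro ⟨he, hnot⟩
        have ha : a ∉ I := hnot a (by simp)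
        have hb : b ∉ I := hnot b (by simp)
        refine ⟨he, a, b, rfl, ?_⟩
        rw [hsing a ha, hsing b hb, Finset.singleton_add_singleton]
        simp
  refine ⟨⟨f, hweak, hmono⟩, ?_⟩
  have : ({e | e ∈ G.edgeSet ∧ ∀ v ∈ e, v ∉ I} : Set (Sym2 V)).ncard ∈
      {n | ∃ g : V → Finset ℕ, IsWeakIASL G g ∧ (monoEdgeSet G g).ncard = n} :=
    ⟨f, hweak, by rw [hmono]⟩
  exact Nat.sInf_le this
end

section
/- Let G be a finite simple graph and let f be any weak integer additive set-labeling of G. Then the number of mono-indexed edges of G under f is at least the minimum, over all independent sets I of G, of the number of edges of G with no end vertex in I. -/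
open Pointwise

theorem mono_edges_ge_min_over_indep {V : Type*} [Fintype V] (G : SimpleGraph V)
    (f : V → Finset ℕ) (hf : IsWeakIASL G f) :
    sInf {n | ∃ I : Set V, (∀ u ∈ I, ∀ v ∈ I, ¬ G.Adj u v) ∧
        {e | e ∈ G.edgeSet ∧ ∀ v ∈ e, v ∉ I}.ncard = n} ≤
      (monoEdgeSet G f).ncard := by
  obtain ⟨-, hne, hweak⟩ := hf
  set I : Set V := {v | 2 ≤ (f v).card} with hI
  have hindep : ∀ u ∈ I, ∀ v ∈ I, ¬ G.Adj u v := by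
    intro u hu v hv hadj
    simp only [hI, Set.mem_setOf_eq] at hu hv
    have hcd : (f u).card + (f v).card - 1 ≤ (f u + f v).card :=
      cauchy_davenport_add_of_linearOrder_isCancelAdd (hne u) (hne v)
    rcases hweak u v hadj with h | h <;> omega
  have hsub : {e | e ∈ G.edgeSet ∧ ∀ v ∈ e, v ∉ I} ⊆ monoEdgeSet G f := by
    intro e he
    obtain ⟨hadj, hnotI⟩ := he
    induction e using Sym2.ind with
    | _ u v =>
      have hu : (f u).card = 1 := by
        have := hnotI u (by simp); simp only [hI, Set.mem_setOf_eq, not_le] at this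
        have := (hne u).card_pos; omega
      have hv : (f v).card = 1 := by
        have := hnotI v (by simp); simp only [hI, Set.mem_setOf_eq, not_le] at this
        have := (hne v).card_pos; omega
      refine ⟨hadj, u, v, rfl, ?_⟩
      have h1 : (f u + f v).card ≤ 1 := by
        have := Finset.card_add_le (s := f u) (t := f v)
        rw [hu, hv] at this; omega
      have h2 : 1 ≤ (f u + f v).card := ((hne u).add (hne v)).card_pos
      omega
  calc sInf {n | ∃ I : Set V, (∀ u ∈ I, ∀ v ∈ I, ¬ G.Adj u v) ∧
        {e | e ∈ G.edgeSet ∧ ∀ v ∈ e, v ∉ I}.ncard = n}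
      ≤ {e | e ∈ G.edgeSet ∧ ∀ v ∈ e, v ∉ I}.ncard := Nat.sInf_le ⟨I, hindep, rfl⟩
    _ ≤ (monoEdgeSet G f).ncard := Set.ncard_le_ncard hsub (Set.toFinite _)
end

section
/- Let G be a finite simple graph and let I be an independent set in G which has maximal incidence in G, i.e., I maximizes, over all independent sets of G, the number of edges of G having at least one end vertex in the set. Then the sparing number of G equals |E(G − I)|, the number of edges of G with no end vertex in I. -/
open Pointwise

lemma monoEdgeSet_eq_aux {V : Type*} (G : SimpleGraph V) (f : V → Finset ℕ)
    (hne : ∀ v, (f v).Nonempty) (K : Set V) (hK : ∀ v, v ∉ K ↔ (f v).card = 1) :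
    monoEdgeSet G f = {e | e ∈ G.edgeSet ∧ ∀ v ∈ e, v ∉ K} := by
  refine Set.ext fun e => Sym2.ind (fun a b => ?_) e
  constructor
  · rintro ⟨he, u, v, heq, hc⟩
    have hc' : (f a + f b).card = 1 := by
      rcases Sym2.eq_iff.mp heq with ⟨rfl, rfl⟩ | ⟨rfl, rfl⟩
      · exact hc
      · rwa [add_comm]
    have ha : (f a).card = 1 :=
      le_antisymm (hc' ▸ Finset.card_le_card_add_right (hne b)) (hne a).card_pos
    have hb : (f b).card = 1 :=
      le_antisymm (hc' ▸ Finset.card_le_card_add_left (hne a)) (hne b).card_pos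
    refine ⟨he, fun v hv => ?_⟩
    rcases Sym2.mem_iff.mp hv with rfl | rfl
    · exact (hK v).mpr ha
    · exact (hK v).mpr hb
  · rintro ⟨he, h⟩
    have ha := (hK a).mp (h a (Sym2.mem_mk_left a b))
    have hb := (hK b).mp (h b (Sym2.mem_mk_right a b))
    obtain ⟨x, hx⟩ := Finset.card_eq_one.mp ha
    obtain ⟨y, hy⟩ := Finset.card_eq_one.mp hb
    exact ⟨he, a, b, rfl, by rw [hx, hy, Finset.singleton_add_singleton]; simp⟩

theorem sparing_number_eq_of_maximal_incidence {V : Type*} [Fintype V] (G : SimpleGraph V)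
    (I : Set V) (hI : ∀ u ∈ I, ∀ v ∈ I, ¬ G.Adj u v)
    (hmax : ∀ J : Set V, (∀ u ∈ J, ∀ v ∈ J, ¬ G.Adj u v) →
      {e | e ∈ G.edgeSet ∧ ∃ v ∈ e, v ∈ J}.ncard ≤
        {e | e ∈ G.edgeSet ∧ ∃ v ∈ e, v ∈ I}.ncard) :
    sparingNumber G = {e | e ∈ G.edgeSet ∧ ∀ v ∈ e, v ∉ I}.ncard := by
  classical
  have hEfin : G.edgeSet.Finite := Set.toFinite _
  -- counting helper
  have hQ : ∀ K : Set V, {e | e ∈ G.edgeSet ∧ ∀ v ∈ e, v ∉ K}.ncard =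
      G.edgeSet.ncard - {e | e ∈ G.edgeSet ∧ ∃ v ∈ e, v ∈ K}.ncard := by
    intro K
    have hdiff : {e | e ∈ G.edgeSet ∧ ∀ v ∈ e, v ∉ K} =
        G.edgeSet \ {e | e ∈ G.edgeSet ∧ ∃ v ∈ e, v ∈ K} := by
      ext e
      simp only [Set.mem_setOf_eq, Set.mem_diff, not_and, not_exists]
      tauto
    have hsub : {e | e ∈ G.edgeSet ∧ ∃ v ∈ e, v ∈ K} ⊆ G.edgeSet := fun e he => he.1
    rw [hdiff]
    exact Set.ncard_diff hsub (hEfin.subset hsub)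
  set N := {e | e ∈ G.edgeSet ∧ ∀ v ∈ e, v ∉ I}.ncard with hN
  -- construction of a weak IASL with mono edge set exactly the edges avoiding I
  obtain ⟨enc, hencinj⟩ := exists_injective_nat V
  set g : V → ℕ := fun v => enc v + 1 with hg
  have hginj : Function.Injective g := fun u v h => hencinj (by simpa [hg] using h)
  have hgpos : ∀ v, g v ≠ 0 := fun v => by simp [hg]
  set f0 : V → Finset ℕ := fun v => if v ∈ I then insert 0 {g v} else {g v} with hf0
  have hcard : ∀ v, v ∈ I → (f0 v).card = 2 := by
    intro v hv
    simp only [hf0, if_pos hv]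
    rw [Finset.card_insert_of_notMem (by simp [(hgpos v).symm, Ne, eq_comm]), Finset.card_singleton]
  have hcard' : ∀ v, v ∉ I → f0 v = {g v} := fun v hv => by simp [hf0, if_neg hv]
  have hne0 : ∀ v, (f0 v).Nonempty := by
    intro v; by_cases hv : v ∈ I <;> simp [hf0, hv]
  have hinj0 : Function.Injective f0 := by
    intro u v huv
    by_cases hu : u ∈ I <;> by_cases hv : v ∈ I
    · simp only [hf0, if_pos hu, if_pos hv] at huv
      have : g u ∈ insert 0 ({g v} : Finset ℕ) := huv ▸ by simp
      rcases Finset.mem_insert.mp this with h | h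
      · exact absurd h (hgpos u)
      · exact hginj (Finset.mem_singleton.mp h)
    · have := huv ▸ hcard u hu
      rw [hcard' v hv, Finset.card_singleton] at this; omega
    · have h2 := hcard v hv
      rw [← huv, hcard' u hu, Finset.card_singleton] at h2; omega
    · rw [hcard' u hu, hcard' v hv] at huv
      exact hginj (Finset.singleton_injective huv)
  have hweak0 : IsWeakIASL G f0 := by
    refine ⟨hinj0, hne0, fun u v hadj => ?_⟩
    by_cases hu : u ∈ I <;> by_cases hv : v ∈ I
    · exact absurd hadj (hI u hu v hv)
    · left; rw [hcard' v hv, Finset.card_add_singleton]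
    · right; rw [hcard' u hu, Finset.card_singleton_add]
    · left; rw [hcard' u hu, hcard' v hv, Finset.singleton_add_singleton]; simp
  have hK0 : ∀ v, v ∉ I ↔ (f0 v).card = 1 := by
    intro v
    constructor
    · intro hv; rw [hcard' v hv, Finset.card_singleton]
    · intro h hv; rw [hcard v hv] at h; omega
  have hmem : N ∈ {n | ∃ f : V → Finset ℕ, IsWeakIASL G f ∧ (monoEdgeSet G f).ncard = n} :=
    ⟨f0, hweak0, by rw [monoEdgeSet_eq_aux G f0 hne0 I hK0]⟩
  -- lower bound
  have hlb : ∀ n ∈ {n | ∃ f : V → Finset ℕ, IsWeakIASL G f ∧ (monoEdgeSet G f).ncard = n},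
      N ≤ n := by
    rintro n ⟨f, ⟨hinj, hne, hweak⟩, rfl⟩
    set J : Set V := {v | 2 ≤ (f v).card} with hJ
    have hJind : ∀ u ∈ J, ∀ v ∈ J, ¬ G.Adj u v := by
      intro u hu v hv hadj
      have hcd : (f u).card + (f v).card - 1 ≤ (f u + f v).card :=
        cauchy_davenport_add_of_linearOrder_isCancelAdd (hne u) (hne v)
      have hu' : 2 ≤ (f u).card := hu
      have hv' : 2 ≤ (f v).card := hv
      rcases hweak u v hadj with h | h <;> omega
    have hKJ : ∀ v, v ∉ J ↔ (f v).card = 1 := by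
      intro v
      have := (hne v).card_pos
      simp only [hJ, Set.mem_setOf_eq, not_le]
      omega
    rw [monoEdgeSet_eq_aux G f hne J hKJ, hQ J, hN, hQ I]
    exact Nat.sub_le_sub_left (hmax J hJind) _
  exact le_antisymm (Nat.sInf_le hmem) (le_csInf ⟨N, hmem⟩ hlb)
end

section
/- For any finite simple graph G, the sparing number of G equals the minimum, over all independent sets I of G, of the number of edges of G with no end vertex in I; equivalently, φ(G) = |E(G)| minus the maximum, over all independent sets I of G, of the number of edges of G with at least one end vertex in I. -/
open Pointwise

/-- Auxiliary: sumset of nonempty finsets has card 1 iff both have card 1. -/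
lemma sum_card_eq_one {a b : Finset ℕ} (ha : a.Nonempty) (hb : b.Nonempty) :
    (a + b).card = 1 ↔ a.card = 1 ∧ b.card = 1 := by
  constructor
  · intro h
    have h1 : a.card ≤ (a + b).card := Finset.card_le_card_add_right hb
    have h2 : b.card ≤ (a + b).card := Finset.card_le_card_add_left ha
    have ha1 : 1 ≤ a.card := Finset.card_pos.mpr ha
    have hb1 : 1 ≤ b.card := Finset.card_pos.mpr hb
    omega
  · rintro ⟨h1, h2⟩
    obtain ⟨x, rfl⟩ := Finset.card_eq_one.mp h1
    obtain ⟨y, rfl⟩ := Finset.card_eq_one.mp h2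
    simp [Finset.singleton_add_singleton]

lemma weak_not_both_big {V : Type*} {G : SimpleGraph V} {f : V → Finset ℕ}
    (hf : IsWeakIASL G f) {u v : V} (h : G.Adj u v) :
    (f u).card = 1 ∨ (f v).card = 1 := by
  obtain ⟨-, hne, hw⟩ := hf
  have hcd : (f u).card + (f v).card - 1 ≤ (f u + f v).card :=
    cauchy_davenport_add_of_linearOrder_isCancelAdd (hne u) (hne v)
  have hu1 : 1 ≤ (f u).card := Finset.card_pos.mpr (hne u)
  have hv1 : 1 ≤ (f v).card := Finset.card_pos.mpr (hne v)
  rcases hw u v h with h' | h' <;> omega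

theorem sparing_number_eq_min_over_indep {V : Type*} [Fintype V] (G : SimpleGraph V) :
    sparingNumber G = sInf {n | ∃ I : Set V, (∀ u ∈ I, ∀ v ∈ I, ¬ G.Adj u v) ∧
        {e | e ∈ G.edgeSet ∧ ∀ v ∈ e, v ∉ I}.ncard = n} ∧
      sparingNumber G = G.edgeSet.ncard -
        sSup {n | ∃ I : Set V, (∀ u ∈ I, ∀ v ∈ I, ¬ G.Adj u v) ∧
          {e | e ∈ G.edgeSet ∧ ∃ v ∈ e, v ∈ I}.ncard = n} := by
  classical
  -- the key set equality
  have hsets : {n | ∃ f : V → Finset ℕ, IsWeakIASL G f ∧ (monoEdgeSet G f).ncard = n} =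
      {n | ∃ I : Set V, (∀ u ∈ I, ∀ v ∈ I, ¬ G.Adj u v) ∧
        {e | e ∈ G.edgeSet ∧ ∀ v ∈ e, v ∉ I}.ncard = n} := by
    ext n
    simp only [Set.mem_setOf_eq]
    constructor
    · rintro ⟨f, hf, rfl⟩
      refine ⟨{v | 2 ≤ (f v).card}, ?_, ?_⟩
      · intro u hu v hv hadj
        rcases weak_not_both_big hf hadj with h | h
        · simp only [Set.mem_setOf_eq] at hu; omega
        · simp only [Set.mem_setOf_eq] at hv; omega
      · symm
        congr 1
        ext e
        induction e using Sym2.ind with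
        | _ u v =>
          simp only [monoEdgeSet, Set.mem_setOf_eq]
          constructor
          · rintro ⟨he, u', v', huv, hcard⟩
            refine ⟨he, ?_⟩
            have := (sum_card_eq_one (hf.2.1 u') (hf.2.1 v')).mp hcard
            intro w hw
            rw [huv] at hw
            simp only [Sym2.mem_iff] at hw
            rcases hw with rfl | rfl <;> omega
          · rintro ⟨he, hmem⟩
            have hu := hmem u (Sym2.mem_mk_left u v)
            have hv := hmem v (Sym2.mem_mk_right u v)
            simp only [Set.mem_setOf_eq, not_le] at hu hv
            have hu1 : 1 ≤ (f u).card := Finset.card_pos.mpr (hf.2.1 u)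
            have hv1 : 1 ≤ (f v).card := Finset.card_pos.mpr (hf.2.1 v)
            exact ⟨he, u, v, rfl, (sum_card_eq_one (hf.2.1 u) (hf.2.1 v)).mpr ⟨by omega, by omega⟩⟩
    · rintro ⟨I, hI, rfl⟩
      obtain ⟨g, hg⟩ : ∃ g : V → ℕ, Function.Injective g :=
        ⟨fun v => (Fintype.equivFin V v : ℕ), fun a b h => by
          exact (Fintype.equivFin V).injective (Fin.ext h)⟩
      set f : V → Finset ℕ := fun v => if v ∈ I then {0, g v + 1} else {g v} with hfdef
      have hcardI : ∀ v ∈ I, (f v).card = 2 := by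
        intro v hv
        simp only [hfdef, if_pos hv]
        rw [Finset.card_insert_of_notMem (by simp), Finset.card_singleton]
      have hcardN : ∀ v ∉ I, f v = {g v} := fun v hv => by simp [hfdef, hv]
      have hne : ∀ v, (f v).Nonempty := by
        intro v
        by_cases hv : v ∈ I
        · exact Finset.card_pos.mp (by rw [hcardI v hv]; norm_num)
        · rw [hcardN v hv]; exact Finset.singleton_nonempty _
      have hinj : Function.Injective f := by
        intro a b hab
        by_cases haI : a ∈ I <;> by_cases hbI : b ∈ I
        · simp only [hfdef, if_pos haI, if_pos hbI] at hab
          have : g a + 1 ∈ ({0, g b + 1} : Finset ℕ) := by rw [← hab]; simp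
          simp only [Finset.mem_insert, Finset.mem_singleton] at this
          rcases this with h | h
          · omega
          · exact hg (by omega)
        · exfalso
          have := hcardI a haI
          rw [hab, hcardN b hbI] at this
          simp at this
        · exfalso
          have := hcardI b hbI
          rw [← hab, hcardN a haI] at this
          simp at this
        · rw [hcardN a haI, hcardN b hbI] at hab
          exact hg (Finset.singleton_injective hab)
      have hcross : ∀ u v, G.Adj u v → (f u + f v).card = (f u).card ∨
          (f u + f v).card = (f v).card := by
        intro u v hadj
        by_cases huI : u ∈ I <;> by_cases hvI : v ∈ I
        · exact absurd hadj (hI u huI v hvI)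
        · left
          rw [hcardN v hvI, Finset.card_add_singleton]
        · right
          rw [hcardN u huI, Finset.card_singleton_add]
        · left
          rw [hcardN u huI, hcardN v hvI, Finset.singleton_add_singleton]
          simp
      refine ⟨f, ⟨hinj, hne, hcross⟩, ?_⟩
      congr 1
      ext e
      induction e using Sym2.ind with
      | _ u v =>
        simp only [monoEdgeSet, Set.mem_setOf_eq]
        constructor
        · rintro ⟨he, u', v', huv, hcard⟩
          refine ⟨he, ?_⟩
          have h1 := (sum_card_eq_one (hne u') (hne v')).mp hcard
          intro w hw
          rw [huv] at hw
          simp only [Sym2.mem_iff] at hw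
          intro hwI
          rcases hw with rfl | rfl
          · have := hcardI w hwI; omega
          · have := hcardI w hwI; omega
        · rintro ⟨he, hmem⟩
          have hu := hmem u (Sym2.mem_mk_left u v)
          have hv := hmem v (Sym2.mem_mk_right u v)
          refine ⟨he, u, v, rfl, ?_⟩
          rw [hcardN u hu, hcardN v hv, Finset.singleton_add_singleton]
          simp
  have hEfin : G.edgeSet.Finite := Set.toFinite _
  -- part 1
  have h1 : sparingNumber G = sInf {n | ∃ I : Set V, (∀ u ∈ I, ∀ v ∈ I, ¬ G.Adj u v) ∧
      {e | e ∈ G.edgeSet ∧ ∀ v ∈ e, v ∉ I}.ncard = n} := by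
    unfold sparingNumber
    rw [hsets]
  refine ⟨h1, ?_⟩
  rw [h1]
  -- Now the complementation argument.
  set A : Set ℕ := {n | ∃ I : Set V, (∀ u ∈ I, ∀ v ∈ I, ¬ G.Adj u v) ∧
      {e | e ∈ G.edgeSet ∧ ∀ v ∈ e, v ∉ I}.ncard = n} with hA
  set B : Set ℕ := {n | ∃ I : Set V, (∀ u ∈ I, ∀ v ∈ I, ¬ G.Adj u v) ∧
      {e | e ∈ G.edgeSet ∧ ∃ v ∈ e, v ∈ I}.ncard = n} with hB
  have hsplit : ∀ I : Set V,
      {e | e ∈ G.edgeSet ∧ ∀ v ∈ e, v ∉ I}.ncard +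
      {e | e ∈ G.edgeSet ∧ ∃ v ∈ e, v ∈ I}.ncard = G.edgeSet.ncard := by
    intro I
    rw [← Set.ncard_union_eq ?_ (hEfin.subset (fun e he => he.1))
        (hEfin.subset (fun e he => he.1))]
    · congr 1
      ext e
      simp only [Set.mem_union, Set.mem_setOf_eq]
      constructor
      · rintro (⟨h, -⟩ | ⟨h, -⟩) <;> exact h
      · intro h
        by_cases hc : ∀ v ∈ e, v ∉ I
        · exact Or.inl ⟨h, hc⟩
        · push_neg at hc
          exact Or.inr ⟨h, hc⟩
    · rw [Set.disjoint_left]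
      rintro e ⟨-, h1⟩ ⟨-, w, hw, hwI⟩
      exact h1 w hw hwI
  have hBbdd : ∀ n ∈ B, n ≤ G.edgeSet.ncard := by
    rintro n ⟨I, -, rfl⟩
    exact Set.ncard_le_ncard (fun e he => he.1) hEfin
  have hBne : B.Nonempty := ⟨_, ∅, by simp, rfl⟩
  have hAne : A.Nonempty := ⟨_, ∅, by simp, rfl⟩
  have hBsup_mem : sSup B ∈ B := Nat.sSup_mem hBne ⟨_, fun n hn => hBbdd n hn⟩
  -- sInf A ≤ |E| - sSup B
  apply le_antisymm
  · obtain ⟨I, hI, hIcard⟩ := hBsup_mem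
    have : G.edgeSet.ncard - sSup B ∈ A := by
      refine ⟨I, hI, ?_⟩
      have := hsplit I
      omega
    exact Nat.sInf_le this
  · have hAinf_mem : sInf A ∈ A := Nat.sInf_mem hAne
    obtain ⟨I, hI, hIcard⟩ := hAinf_mem
    have hmemB : {e | e ∈ G.edgeSet ∧ ∃ v ∈ e, v ∈ I}.ncard ∈ B := ⟨I, hI, rfl⟩
    have hle : {e | e ∈ G.edgeSet ∧ ∃ v ∈ e, v ∈ I}.ncard ≤ sSup B :=
      le_csSup ⟨_, fun n hn => hBbdd n hn⟩ hmemB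
    have := hsplit I
    have hb := hBbdd _ hmemB
    omega
end
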